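/- Let ν be a finite signed measure on ℝ with total mass zero (ν(ℝ) = 0), finite second moment (∫ y² d|ν|(y) < ∞, where |ν| is the total variation measure), and ∫ y dν(y) = 1. Define ψ : ℝ → ℂ by ψ(u) = (e^{iu} − 1)/(iu) for u ≠ 0 and ψ(0) = 1, and set g(x) = ∫ ψ(x·y)·y dν(y) for x ∈ ℝ. Then: (i) for every x ≠ 0 one has g(x) = (ix)^{−1} ∫ e^{ixy} dν(y); (ii) g is continuously differentiable on ℝ; (iii) g and g′ are bounded; and (iv) g(0) = 1. -/

import Mathlib

open MeasureTheory

/-- Integral of a real function against a finite signed measure, via the Jordan decomposition. -/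
noncomputable def signedIntegral (p : SignedMeasure ℝ) (g : ℝ → ℝ) : ℝ :=
  (∫ y, g y ∂p.toJordanDecomposition.posPart) - ∫ y, g y ∂p.toJordanDecomposition.negPart

/-- Integral of a complex function against a finite signed measure, via the Jordan
decomposition. -/
noncomputable def csignedIntegral (p : SignedMeasure ℝ) (g : ℝ → ℂ) : ℂ :=
  (∫ y, g y ∂p.toJordanDecomposition.posPart) - ∫ y, g y ∂p.toJordanDecomposition.negPart

/-- `ψ(u) = (e^{iu} - 1)/(iu)` for `u ≠ 0`, and `ψ(0) = 1`. -/
noncomputable def psiFn (u : ℝ) : ℂ :=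
  if u = 0 then 1 else (Complex.exp (Complex.I * (u : ℂ)) - 1) / (Complex.I * (u : ℂ))

/-- `g(x) = ∫ ψ(x y) y dν(y)`. -/
noncomputable def gFn (p : SignedMeasure ℝ) (x : ℝ) : ℂ :=
  csignedIntegral p (fun y => psiFn (x * y) * (y : ℂ))

noncomputable def lam01 : Measure ℝ := volume.restrict (Set.Ioc (0:ℝ) 1)
instance : IsFiniteMeasure lam01 := by constructor; simp [lam01, Real.volume_Ioc]
lemma lam01_univ : lam01 Set.univ = 1 := by simp [lam01, Real.volume_Ioc]
noncomputable def Phi (u : ℝ) : ℂ := ∫ t, Complex.exp (Complex.I * t * u) ∂lam01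
noncomputable def Phi' (u : ℝ) : ℂ :=
  ∫ t, Complex.exp (Complex.I * t * u) * (Complex.I * t) ∂lam01
lemma norm_exp_Itu (t u : ℝ) : ‖Complex.exp (Complex.I * t * u)‖ = 1 := by
  rw [Complex.norm_exp]; simp
lemma ae_t : ∀ᵐ t ∂lam01, t ∈ Set.Ioc (0:ℝ) 1 := ae_restrict_mem measurableSet_Ioc

lemma psiFn_eq_Phi (u : ℝ) : psiFn u = Phi u := by
  have h : Phi u = ∫ t in (0:ℝ)..1, Complex.exp (Complex.I * t * u) := by
    rw [intervalIntegral.integral_of_le zero_le_one]; rfl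
  by_cases hu : u = 0
  · subst hu; simp [psiFn, h]
  · have hc : (Complex.I * u) ≠ 0 := by
      simp [Complex.I_ne_zero, Complex.ofReal_eq_zero, hu]
    rw [psiFn, if_neg hu, h]
    have : ∀ t : ℝ, Complex.exp (Complex.I * t * u) = Complex.exp ((Complex.I * u) * t) := by
      intro t; ring_nf
    simp_rw [this]
    rw [integral_exp_mul_complex hc]
    norm_num


lemma cont_t (u : ℝ) : Continuous fun t : ℝ => Complex.exp (Complex.I * t * u) := by
  fun_prop

lemma cont_t' (u : ℝ) :
    Continuous fun t : ℝ => Complex.exp (Complex.I * t * u) * (Complex.I * t) := by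
  fun_prop

lemma norm_deriv_le (t u : ℝ) :
    ‖Complex.exp (Complex.I * t * u) * (Complex.I * t)‖ = |t| := by
  rw [norm_mul, norm_exp_Itu, one_mul, norm_mul, Complex.norm_I, one_mul,
    Complex.norm_real, Real.norm_eq_abs]

lemma hasDerivAt_inner (t x : ℝ) :
    HasDerivAt (fun x : ℝ => Complex.exp (Complex.I * t * x))
      (Complex.exp (Complex.I * t * x) * (Complex.I * t)) x := by
  have h1 : HasDerivAt (fun x : ℝ => Complex.I * t * (x : ℂ)) (Complex.I * t) x := by
    simpa using (Complex.ofRealCLM.hasDerivAt (x := x)).const_mul (Complex.I * t)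
  exact h1.cexp

lemma hasDerivAt_Phi (u : ℝ) : HasDerivAt Phi (Phi' u) u := by
  have := hasDerivAt_integral_of_dominated_loc_of_deriv_le (μ := lam01)
    (F := fun (x : ℝ) (t : ℝ) => Complex.exp (Complex.I * t * x))
    (F' := fun (x : ℝ) (t : ℝ) => Complex.exp (Complex.I * t * x) * (Complex.I * t))
    (bound := fun _ => 1) (x₀ := u) (s := Metric.ball u 1) (Metric.ball_mem_nhds u one_pos)
    (Filter.Eventually.of_forall fun x => (cont_t x).aestronglyMeasurable)
    (((integrable_const (1:ℝ)).mono' (cont_t u).aestronglyMeasurable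
      (Filter.Eventually.of_forall fun t => by rw [norm_exp_Itu])))
    ((cont_t' u).aestronglyMeasurable)
    (ae_t.mono fun t ht x _ => by
      rw [norm_deriv_le]
      exact abs_le_abs (le_trans ht.2 (le_refl 1)) (by linarith [ht.1]) |>.trans_eq (abs_one))
    (integrable_const 1)
    (Filter.Eventually.of_forall fun t x _ => hasDerivAt_inner t x)
  exact this.2

lemma continuous_Phi : Continuous Phi :=
  continuous_iff_continuousAt.2 fun u => (hasDerivAt_Phi u).continuousAt

lemma continuous_Phi' : Continuous Phi' := by
  apply continuous_of_dominated (bound := fun _ => 1)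
    (fun u => (cont_t' u).aestronglyMeasurable)
    (fun u => ae_t.mono fun t ht => by
      rw [norm_deriv_le]
      rw [abs_of_pos ht.1]; exact ht.2)
    (integrable_const 1)
    (Filter.Eventually.of_forall fun t => by fun_prop)

lemma norm_Phi_le (u : ℝ) : ‖Phi u‖ ≤ 1 := by
  have h := norm_integral_le_of_norm_le_const (μ := lam01)
    (f := fun t : ℝ => Complex.exp (Complex.I * t * u)) (C := 1)
    (Filter.Eventually.of_forall fun t => le_of_eq (norm_exp_Itu t u))
  simpa [Phi, Measure.real, lam01_univ] using h

lemma norm_Phi'_le (u : ℝ) : ‖Phi' u‖ ≤ 1 := by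
  have h := norm_integral_le_of_norm_le_const (μ := lam01)
    (f := fun t : ℝ => Complex.exp (Complex.I * t * u) * (Complex.I * t)) (C := 1)
    (ae_t.mono fun t ht => by rw [norm_deriv_le, abs_of_pos ht.1]; exact ht.2)
  simpa [Phi', Measure.real, lam01_univ] using h

attribute [fun_prop] continuous_Phi continuous_Phi'

section Meas
variable {μ : Measure ℝ} [IsFiniteMeasure μ]

lemma abs_le_one_add_sq (y : ℝ) : |y| ≤ 1 + y ^ 2 := by
  nlinarith [sq_nonneg (|y| - 1), sq_abs y, abs_nonneg y]

lemma integrable_abs_of_mom2 (h2 : Integrable (fun y : ℝ => y ^ 2) μ) :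
    Integrable (fun y : ℝ => |y|) μ := by
  refine ((integrable_const (1:ℝ)).add h2).mono' continuous_abs.aestronglyMeasurable ?_
  exact Filter.Eventually.of_forall fun y => by
    simpa [abs_abs] using abs_le_one_add_sq y

lemma norm_F_le (x y : ℝ) : ‖Phi (x * y) * (y : ℂ)‖ ≤ |y| := by
  rw [norm_mul, Complex.norm_real, Real.norm_eq_abs]
  nlinarith [norm_Phi_le (x * y), abs_nonneg y, norm_nonneg (Phi (x*y))]

lemma norm_F'_le (x y : ℝ) : ‖(y • Phi' (x * y)) * (y : ℂ)‖ ≤ y ^ 2 := by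
  rw [norm_mul, norm_smul, Complex.norm_real, Real.norm_eq_abs]
  nlinarith [norm_Phi'_le (x * y), abs_nonneg y, norm_nonneg (Phi' (x*y)), sq_abs y]

lemma cont_F (x : ℝ) : Continuous fun y : ℝ => Phi (x * y) * (y : ℂ) := by fun_prop
lemma cont_F' (x : ℝ) : Continuous fun y : ℝ => (y • Phi' (x * y)) * (y : ℂ) := by fun_prop

lemma hasDerivAt_F (x y : ℝ) :
    HasDerivAt (fun x : ℝ => Phi (x * y) * (y : ℂ)) ((y • Phi' (x * y)) * (y : ℂ)) x := by
  have h1 : HasDerivAt (fun x : ℝ => x * y) y x := hasDerivAt_mul_const y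
  have h2 := (hasDerivAt_Phi (x * y)).scomp x h1
  exact h2.mul_const (y : ℂ)

lemma integrable_F (h2 : Integrable (fun y : ℝ => y ^ 2) μ) (x : ℝ) :
    Integrable (fun y => Phi (x * y) * (y : ℂ)) μ :=
  (integrable_abs_of_mom2 h2).mono' (cont_F x).aestronglyMeasurable
    (Filter.Eventually.of_forall fun y => norm_F_le x y)

lemma hasDerivAt_G (h2 : Integrable (fun y : ℝ => y ^ 2) μ) (x : ℝ) :
    HasDerivAt (fun x => ∫ y, Phi (x * y) * (y : ℂ) ∂μ)
      (∫ y, (y • Phi' (x * y)) * (y : ℂ) ∂μ) x := by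
  have := hasDerivAt_integral_of_dominated_loc_of_deriv_le (μ := μ)
    (F := fun (x : ℝ) (y : ℝ) => Phi (x * y) * (y : ℂ))
    (F' := fun (x : ℝ) (y : ℝ) => (y • Phi' (x * y)) * (y : ℂ))
    (bound := fun y => y ^ 2) (x₀ := x) (s := Metric.ball x 1) (Metric.ball_mem_nhds x one_pos)
    (Filter.Eventually.of_forall fun x => (cont_F x).aestronglyMeasurable)
    (integrable_F h2 x)
    ((cont_F' x).aestronglyMeasurable)
    (Filter.Eventually.of_forall fun y x' _ => norm_F'_le x' y)
    h2
    (Filter.Eventually.of_forall fun y x' _ => hasDerivAt_F x' y)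
  exact this.2

lemma continuous_D (h2 : Integrable (fun y : ℝ => y ^ 2) μ) :
    Continuous fun x => ∫ y, (y • Phi' (x * y)) * (y : ℂ) ∂μ := by
  apply continuous_of_dominated (bound := fun y => y ^ 2)
    (fun x => (cont_F' x).aestronglyMeasurable)
    (fun x => Filter.Eventually.of_forall fun y => norm_F'_le x y)
    h2
    (Filter.Eventually.of_forall fun y => by fun_prop)

lemma norm_G_le (h2 : Integrable (fun y : ℝ => y ^ 2) μ) (x : ℝ) :
    ‖∫ y, Phi (x * y) * (y : ℂ) ∂μ‖ ≤ ∫ y, |y| ∂μ :=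
  norm_integral_le_of_norm_le (integrable_abs_of_mom2 h2)
    (Filter.Eventually.of_forall fun y => norm_F_le x y)

lemma norm_D_le (h2 : Integrable (fun y : ℝ => y ^ 2) μ) (x : ℝ) :
    ‖∫ y, (y • Phi' (x * y)) * (y : ℂ) ∂μ‖ ≤ ∫ y, y ^ 2 ∂μ :=
  norm_integral_le_of_norm_le h2 (Filter.Eventually.of_forall fun y => norm_F'_le x y)

end Meas

lemma norm_exp_Itu' (x y : ℝ) : ‖Complex.exp (Complex.I * ((x * y : ℝ) : ℂ))‖ = 1 := by
  rw [Complex.norm_exp]; simp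

theorem stmt2 (p : SignedMeasure ℝ)
    (hmass : p Set.univ = 0)
    (hmom2 : (∫⁻ y, ENNReal.ofReal (y ^ 2) ∂p.totalVariation) < ⊤)
    (hmean : signedIntegral p (fun y => y) = 1) :
    (∀ x : ℝ, x ≠ 0 → gFn p x =
      (Complex.I * (x : ℂ))⁻¹ *
        csignedIntegral p (fun y => Complex.exp (Complex.I * (x : ℂ) * (y : ℂ)))) ∧
    ContDiff ℝ 1 (gFn p) ∧
    (∃ M : ℝ, ∀ x : ℝ, ‖gFn p x‖ ≤ M ∧ ‖deriv (gFn p) x‖ ≤ M) ∧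
    gFn p 0 = 1 := by
  classical
  set μp := p.toJordanDecomposition.posPart with hμp
  set μn := p.toJordanDecomposition.negPart with hμn
  have htv : p.totalVariation = μp + μn := rfl
  rw [htv, lintegral_add_measure] at hmom2
  have h2p : Integrable (fun y : ℝ => y ^ 2) μp := by
    refine ⟨(by fun_prop : Continuous fun y : ℝ => y ^ 2).aestronglyMeasurable, ?_⟩
    rw [hasFiniteIntegral_iff_ofReal (Filter.Eventually.of_forall fun y => sq_nonneg y)]
    exact lt_of_le_of_lt le_self_add hmom2
  have h2n : Integrable (fun y : ℝ => y ^ 2) μn := by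
    refine ⟨(by fun_prop : Continuous fun y : ℝ => y ^ 2).aestronglyMeasurable, ?_⟩
    rw [hasFiniteIntegral_iff_ofReal (Filter.Eventually.of_forall fun y => sq_nonneg y)]
    exact lt_of_le_of_lt le_add_self hmom2
  have hg : gFn p = fun x => (∫ y, Phi (x * y) * (y : ℂ) ∂μp) -
      ∫ y, Phi (x * y) * (y : ℂ) ∂μn := by
    funext x
    simp only [gFn, csignedIntegral, psiFn_eq_Phi, hμp, hμn]
  have hder : ∀ x : ℝ, HasDerivAt (gFn p)
      ((∫ y, (y • Phi' (x * y)) * (y : ℂ) ∂μp) -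
        ∫ y, (y • Phi' (x * y)) * (y : ℂ) ∂μn) x := by
    intro x
    rw [hg]
    exact (hasDerivAt_G h2p x).sub (hasDerivAt_G h2n x)
  have hderiv : deriv (gFn p) = fun x =>
      (∫ y, (y • Phi' (x * y)) * (y : ℂ) ∂μp) -
        ∫ y, (y • Phi' (x * y)) * (y : ℂ) ∂μn := funext fun x => (hder x).deriv
  have hmass' : ((μp Set.univ).toReal : ℂ) - ((μn Set.univ).toReal : ℂ) = 0 := by
    have h := p.toSignedMeasure_toJordanDecomposition
    have h2 : p Set.univ = (μp Set.univ).toReal - (μn Set.univ).toReal := by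
      conv_lhs => rw [← h]
      rw [MeasureTheory.JordanDecomposition.toSignedMeasure, VectorMeasure.sub_apply,
        Measure.toSignedMeasure_apply_measurable MeasurableSet.univ,
        Measure.toSignedMeasure_apply_measurable MeasurableSet.univ]
      rfl
    rw [h2] at hmass
    push_cast
    rw [← Complex.ofReal_sub, hmass, Complex.ofReal_zero]
  refine ⟨?_, ?_, ?_, ?_⟩
  · -- part (i)
    intro x hx
    have hpt : ∀ y : ℝ, Phi (x * y) * (y : ℂ) =
        (Complex.I * x)⁻¹ * (Complex.exp (Complex.I * x * y) - 1) := by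
      intro y
      rw [← psiFn_eq_Phi]
      by_cases hy : y = 0
      · subst hy; simp
      · have hxy : x * y ≠ 0 := mul_ne_zero hx hy
        have hI : (Complex.I * x) ≠ 0 :=
          mul_ne_zero Complex.I_ne_zero (Complex.ofReal_ne_zero.2 hx)
        have hy' : (y : ℂ) ≠ 0 := Complex.ofReal_ne_zero.2 hy
        rw [psiFn, if_neg hxy]
        have harg : (Complex.I * ((x * y : ℝ) : ℂ)) = Complex.I * x * y := by
          push_cast; ring
        rw [harg]
        field_simp
    have hexp : ∀ (μ : Measure ℝ) [IsFiniteMeasure μ],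
        Integrable (fun y : ℝ => Complex.exp (Complex.I * x * y)) μ := by
      intro μ _
      refine (integrable_const (1 : ℝ)).mono'
        ((Complex.continuous_exp.comp (by fun_prop)).aestronglyMeasurable) ?_
      refine Filter.Eventually.of_forall fun y => ?_
      rw [show (Complex.I * ↑x * ↑y) = Complex.I * ↑x * ↑y from rfl]
      rw [mul_assoc, ← Complex.ofReal_mul]
      exact le_of_eq (norm_exp_Itu' x y)
    have hint : ∀ (μ : Measure ℝ) [IsFiniteMeasure μ],
        (∫ y, Phi (x * y) * (y : ℂ) ∂μ) = (Complex.I * x)⁻¹ *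
          ((∫ y, Complex.exp (Complex.I * x * y) ∂μ) - ((μ Set.univ).toReal : ℂ)) := by
      intro μ _
      simp_rw [hpt]
      rw [integral_const_mul]
      congr 1
      rw [integral_sub (hexp μ) (integrable_const 1), integral_const]
      simp [Measure.real]
    rw [hg]
    simp only []
    rw [hint μp, hint μn, csignedIntegral]
    linear_combination (-(Complex.I * (x : ℂ))⁻¹) * hmass'
  · -- part (ii)
    rw [contDiff_one_iff_deriv]
    exact ⟨fun x => (hder x).differentiableAt,
      by rw [hderiv]; exact (continuous_D h2p).sub (continuous_D h2n)⟩
  · -- part (iii)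
    refine ⟨((∫ y, |y| ∂μp) + ∫ y, |y| ∂μn) + ((∫ y, y ^ 2 ∂μp) + ∫ y, y ^ 2 ∂μn),
      fun x => ⟨?_, ?_⟩⟩
    · have h1 := norm_G_le h2p x
      have h2 := norm_G_le h2n x
      have h3 : (0:ℝ) ≤ ∫ y, y ^ 2 ∂μp := integral_nonneg fun y => sq_nonneg y
      have h4 : (0:ℝ) ≤ ∫ y, y ^ 2 ∂μn := integral_nonneg fun y => sq_nonneg y
      rw [hg]
      have := norm_sub_le (∫ y, Phi (x * y) * (y : ℂ) ∂μp) (∫ y, Phi (x * y) * (y : ℂ) ∂μn)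
      simp only []
      linarith
    · have h1 := norm_D_le h2p x
      have h2 := norm_D_le h2n x
      have h3 : (0:ℝ) ≤ ∫ y, |y| ∂μp := integral_nonneg fun y => abs_nonneg y
      have h4 : (0:ℝ) ≤ ∫ y, |y| ∂μn := integral_nonneg fun y => abs_nonneg y
      rw [hderiv]
      have := norm_sub_le (∫ y, (y • Phi' (x * y)) * (y : ℂ) ∂μp)
        (∫ y, (y • Phi' (x * y)) * (y : ℂ) ∂μn)
      simp only []
      linarith
  · -- part (iv)
    have h0 : gFn p 0 = csignedIntegral p fun y => (y : ℂ) := by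
      simp [gFn, psiFn]
    rw [h0, csignedIntegral]
    have hip : Integrable (fun y : ℝ => y) μp :=
      (integrable_abs_of_mom2 h2p).mono' aestronglyMeasurable_id
        (Filter.Eventually.of_forall fun y => le_of_eq (Real.norm_eq_abs y))
    have hin : Integrable (fun y : ℝ => y) μn :=
      (integrable_abs_of_mom2 h2n).mono' aestronglyMeasurable_id
        (Filter.Eventually.of_forall fun y => le_of_eq (Real.norm_eq_abs y))
    have e1 : (∫ y, (y : ℂ) ∂μp) = ((∫ y, y ∂μp : ℝ) : ℂ) := by
      simpa using ContinuousLinearMap.integral_comp_comm Complex.ofRealCLM hip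
    have e2 : (∫ y, (y : ℂ) ∂μn) = ((∫ y, y ∂μn : ℝ) : ℂ) := by
      simpa using ContinuousLinearMap.integral_comp_comm Complex.ofRealCLM hin
    rw [e1, e2, ← Complex.ofReal_sub]
    have hfin : (∫ y, y ∂μp) - ∫ y, y ∂μn = signedIntegral p fun y => y := rfl
    rw [hfin, hmean, Complex.ofReal_one]
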